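/- Let G be a finite group. If the abelianization of the unit group of the integral group ring ℤG is finite, then G is a cut group, i.e. the unit group of the center of ℤG is finite. -/

import Mathlib

open MonoidAlgebra Module

section AuxCut

variable {K : Type*} [Field K]

/-- The canonical ring hom `ℤ[G] →+* K[G]`. -/
noncomputable def intMA (K : Type*) [Field K] (G : Type*) [Group G] :
    MonoidAlgebra ℤ G →+* MonoidAlgebra K G :=
  MonoidAlgebra.liftNCRingHom (Int.castRingHom (MonoidAlgebra K G)) (MonoidAlgebra.of K G)
    fun x _ => Int.cast_commute x _

lemma intMA_single {G : Type*} [Group G] (g : G) (n : ℤ) :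
    intMA K G (MonoidAlgebra.single g n) = MonoidAlgebra.single g (n : K) := by
  show MonoidAlgebra.liftNC _ _ _ = _
  rw [MonoidAlgebra.liftNC_single]
  show ((n : ℤ) : MonoidAlgebra K G) * MonoidAlgebra.single g 1 = _
  rw [MonoidAlgebra.intCast_def, MonoidAlgebra.single_mul_single, one_mul, mul_one]

lemma intMA_apply {G : Type*} [Group G] (a : MonoidAlgebra ℤ G) (g : G) :
    (intMA K G a).coeff g = (a.coeff g : K) := by
  induction a using MonoidAlgebra.induction_linear with
  | zero => simp
  | add f h hf hh =>
      have : intMA K G (f + h) = intMA K G f + intMA K G h := map_add _ _ _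
      rw [this]
      show (intMA K G f).coeff g + (intMA K G h).coeff g = _
      rw [hf, hh]
      show _ = ((f.coeff g + h.coeff g : ℤ) : K)
      push_cast
      ring
  | single g' n =>
      classical
      rw [intMA_single]
      show Finsupp.single g' (n : K) g = ((Finsupp.single g' n g : ℤ) : K)
      simp [Finsupp.single_apply, apply_ite (fun z : ℤ => (z : K))]

lemma intMA_injective {G : Type*} [Group G] [CharZero K] :
    Function.Injective (intMA K G) := by
  intro a b hab
  ext g
  have := congrArg (fun x : MonoidAlgebra K G => x.coeff g) hab
  simp only [intMA_apply] at this
  exact_mod_cast this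

lemma intMA_central {G : Type*} [Group G] {a : MonoidAlgebra ℤ G}
    (ha : a ∈ Subring.center (MonoidAlgebra ℤ G)) (b : MonoidAlgebra K G) :
    b * intMA K G a = intMA K G a * b := by
  induction b using MonoidAlgebra.induction_linear with
  | zero => simp
  | add f h hf hh =>
      rw [add_mul, mul_add, hf, hh]
  | single g c =>
      have h1 : (MonoidAlgebra.single g c : MonoidAlgebra K G)
          = c • MonoidAlgebra.single g (1 : K) := by
        rw [MonoidAlgebra.smul_single', mul_one]
      have h2 : (MonoidAlgebra.single g (1 : K)) = intMA K G (MonoidAlgebra.single g (1 : ℤ)) := by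
        rw [intMA_single]; norm_num
      show (MonoidAlgebra.single g c : MonoidAlgebra K G) * intMA K G a
          = intMA K G a * (MonoidAlgebra.single g c : MonoidAlgebra K G)
      rw [h1, smul_mul_assoc, mul_smul_comm, h2, ← map_mul, ← map_mul,
        Subring.mem_center_iff.mp ha (MonoidAlgebra.single g 1)]

lemma central_smul_on_simple {B : Type*} [Ring B] [Algebra K B] [IsAlgClosed K]
    [FiniteDimensional K B]
    (b : B) (hb : ∀ r : B, r * b = b * r) (S : Submodule B B) (hS : IsSimpleModule B S) :
    ∃ c : K, ∀ x ∈ S, b * x = c • x := by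
  haveI : Nontrivial ↥S := IsSimpleModule.nontrivial B ↥S
  haveI : Nontrivial ↥(S.restrictScalars K) := ‹Nontrivial ↥S›
  have hmem : ∀ x ∈ S.restrictScalars K, LinearMap.mulLeft K b x ∈ S.restrictScalars K := by
    intro x hx
    have : x ∈ S := hx
    simpa [smul_eq_mul] using S.smul_mem b this
  let L : ↥(S.restrictScalars K) →ₗ[K] ↥(S.restrictScalars K) :=
    (LinearMap.mulLeft K b).restrict hmem
  obtain ⟨c, hc⟩ := Module.End.exists_eigenvalue L
  obtain ⟨x, hx⟩ := hc.exists_hasEigenvector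
  refine ⟨c, ?_⟩
  have hxS : (x : B) ∈ S := x.2
  have hbx : b * (x : B) = c • (x : B) := by
    have := hx.apply_eq_smul
    have h2 := congrArg (Subtype.val) this
    simpa [L, LinearMap.restrict_apply] using h2
  have hxne : (x : B) ≠ 0 := fun h0 => hx.right (Subtype.ext h0)
  let W : Submodule B B :=
    { carrier := {y | y ∈ S ∧ b * y = c • y}
      add_mem' := fun {y} {z} hy hz => ⟨S.add_mem hy.1 hz.1, by
        rw [mul_add, hy.2, hz.2, smul_add]⟩
      zero_mem' := ⟨S.zero_mem, by simp⟩
      smul_mem' := fun r y hy => ⟨S.smul_mem r hy.1, by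
        show b * (r * y) = c • (r * y)
        rw [← mul_assoc, ← hb r, mul_assoc, hy.2, mul_smul_comm]⟩ }
  have hWS : W ≤ S := fun y hy => hy.1
  have hWbot : W ≠ ⊥ := by
    intro hW
    have hxW : (x : B) ∈ W := ⟨hxS, hbx⟩
    rw [hW, Submodule.mem_bot] at hxW
    exact hxne hxW
  have hatom : IsAtom S := (isSimpleModule_iff_isAtom).mp hS
  have : W = S := by
    rcases (hatom.le_iff).mp hWS with h | h
    · exact absurd h hWbot
    · exact h
  intro y hy
  exact ((this ▸ hy) : y ∈ W).2

/-- Left multiplication restricted to a submodule, as a monoid hom to the endomorphisms. -/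
noncomputable def mulLeftRestrict {B : Type*} [Ring B] [Algebra K B] (S : Submodule B B) :
    B →* Module.End K ↥(S.restrictScalars K) where
  toFun b := (LinearMap.mulLeft K b).restrict (fun x hx => by
    have : x ∈ S := hx
    simpa [smul_eq_mul] using S.smul_mem b this)
  map_one' := by
    apply LinearMap.ext
    intro x
    apply Subtype.ext
    simp [LinearMap.restrict_apply]
  map_mul' b₁ b₂ := by
    apply LinearMap.ext
    intro x
    apply Subtype.ext
    simp [LinearMap.restrict_apply, Module.End.mul_apply, mul_assoc]

lemma mulLeftRestrict_coe {B : Type*} [Ring B] [Algebra K B] (S : Submodule B B) (b : B)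
    (x : ↥(S.restrictScalars K)) : ((mulLeftRestrict S b) x : B) = b * (x : B) := by
  simp [mulLeftRestrict, LinearMap.restrict_apply]

lemma det_scalar {B : Type*} [Ring B] [Algebra K B] [FiniteDimensional K B]
    (S : Submodule B B) (b : B) (c : K) (hc : ∀ x ∈ S, b * x = c • x) :
    LinearMap.det (mulLeftRestrict S b) = c ^ (finrank K ↥(S.restrictScalars K)) := by
  have : mulLeftRestrict S b = c • (1 : Module.End K ↥(S.restrictScalars K)) := by
    apply LinearMap.ext
    intro x
    apply Subtype.ext
    have hx : (x : B) ∈ S := x.2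
    simp [mulLeftRestrict_coe, hc _ hx]
  rw [this, LinearMap.det_smul, map_one, mul_one]

universe u

theorem cut_aux (K : Type u) [Field K] [IsAlgClosed K] [CharZero K] (G : Type u)
    [Group G] [Finite G]
    (h : Finite (Abelianization (MonoidAlgebra ℤ G)ˣ)) :
    Finite (↥(Subring.center (MonoidAlgebra ℤ G)))ˣ := by
  classical
  cases nonempty_fintype G
  letI : NeZero ((Fintype.card G : K)) := ⟨Nat.cast_ne_zero.mpr Fintype.card_ne_zero⟩
  set A := MonoidAlgebra ℤ G with hAdef
  set B := MonoidAlgebra K G with hBdef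
  letI : FiniteDimensional K B :=
    Module.Finite.equiv ((Finsupp.linearEquivFunOnFinite K K G).symm.trans (MonoidAlgebra.coeffLinearEquiv K).symm)
  letI : IsNoetherian B B := isNoetherian_of_tower K inferInstance
  haveI : IsSemisimpleRing B := by
    haveI : NeZero (Nat.card G : K) := by rwa [Nat.card_eq_fintype_card]
    infer_instance
  let φ := intMA K G
  let j : (Subring.center A) →* A := ((Subring.center A).subtype).toMonoidHom
  let f : (↥(Subring.center A))ˣ →* Abelianization Aˣ :=
    (Abelianization.of).comp (Units.map j)
  have hcompact : ∀ s : Set (Submodule B B), ⊤ ≤ sSup s → ∃ t : Finset (Submodule B B), ↑t ⊆ s ∧ ⊤ ≤ t.sup id :=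
    (CompleteLattice.isCompactElement_iff_exists_le_sSup_of_le_sSup _ _).mp ((Submodule.fg_iff_compact _).mp (IsNoetherian.noetherian ⊤))
  have hsup : sSup {m : Submodule B B | IsSimpleModule B m} = ⊤ :=
    IsSemisimpleModule.sSup_simples_eq_top B B
  obtain ⟨t, ht_sub, ht_top⟩ :=
    hcompact {m : Submodule B B | IsSimpleModule B m} (le_of_eq hsup.symm)
  have hcent : ∀ u : (↥(Subring.center A))ˣ, ∀ r : B, r * φ (j u) = φ (j u) * r :=
    fun u r => intMA_central (u : ↥(Subring.center A)).2 r
  have key : ∀ (u : (↥(Subring.center A))ˣ) (S : Submodule B B), S ∈ t →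
      ∃ c : K, ∀ x ∈ S, φ (j u) * x = c • x := by
    intro u S hS
    exact central_smul_on_simple (K := K) (φ (j u)) (hcent u) S (ht_sub hS)
  have hdet : ∀ u : (↥(Subring.center A))ˣ, u ∈ f.ker → ∀ (S : Submodule B B), S ∈ t →
      LinearMap.det (mulLeftRestrict (K := K) S (φ (j u))) = (1 : K) := by
    intro u hu S hS
    have h1 : Abelianization.of (Units.map j u) = 1 := hu
    let F : Aˣ →* Kˣ :=
      Units.map ((LinearMap.det).comp ((mulLeftRestrict (K := K) (B := B) S).comp φ.toMonoidHom))
    have h2 : F (Units.map j u) = 1 := by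
      have h3 := congrArg (Abelianization.lift F) h1
      rwa [Abelianization.lift_apply_of, map_one] at h3
    have h4 := congrArg (Units.val) h2
    simpa [F, Units.coe_map] using h4
  have hroot : ∀ u : (↥(Subring.center A))ˣ, u ∈ f.ker → ∀ (S : Submodule B B), (hS : S ∈ t) →
      (Classical.choose (key u S hS)) ^ (finrank K ↥(S.restrictScalars K)) = 1 := by
    intro u hu S hS
    have hc := Classical.choose_spec (key u S hS)
    rw [← det_scalar (K := K) S (φ (j u)) _ hc]
    exact hdet u hu S hS
  haveI hKfin : Finite f.ker := by
    have hfin : ∀ S : t,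
        Finite {c : K // c ^ (finrank K ↥((S : Submodule B B).restrictScalars K)) = 1} := by
      intro S
      haveI hS : IsSimpleModule B ↥(S : Submodule B B) := ht_sub S.2
      haveI : Nontrivial ↥((S : Submodule B B)) := IsSimpleModule.nontrivial B _
      haveI : Nontrivial ↥((S : Submodule B B).restrictScalars K) :=
        ‹Nontrivial ↥((S : Submodule B B))›
      have hd : finrank K ↥((S : Submodule B B).restrictScalars K) ≠ 0 :=
        (finrank_pos (R := K) (M := ↥((S : Submodule B B).restrictScalars K))).ne'
      have hpoly : ((Polynomial.X : Polynomial K)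
          ^ (finrank K ↥((S : Submodule B B).restrictScalars K)) - 1) ≠ 0 := by
        intro hp
        have := congrArg (Polynomial.eval 0) hp
        simp [zero_pow hd] at this
      have hfin2 :
          {c : K | c ^ (finrank K ↥((S : Submodule B B).restrictScalars K)) = 1}.Finite := by
        apply Set.Finite.subset (Polynomial.finite_setOf_isRoot hpoly)
        intro c hc
        simp only [Set.mem_setOf_eq, Polynomial.IsRoot, Polynomial.eval_sub,
          Polynomial.eval_pow, Polynomial.eval_X, Polynomial.eval_one, sub_eq_zero]
        exact hc
      exact hfin2.to_subtype
    haveI := hfin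
    let Φ : f.ker →
        (∀ S : t, {c : K // c ^ (finrank K ↥((S : Submodule B B).restrictScalars K)) = 1}) :=
      fun u S => ⟨Classical.choose (key u.1 S.1 S.2), hroot u.1 u.2 S.1 S.2⟩
    apply Finite.of_injective Φ
    intro u v huv
    have hmul : ∀ (S : Submodule B B), S ∈ t → ∀ x ∈ S, φ (j u.1) * x = φ (j v.1) * x := by
      intro S hS x hx
      have h1 := Classical.choose_spec (key u.1 S hS) x hx
      have h2 := Classical.choose_spec (key v.1 S hS) x hx
      have h3 : Classical.choose (key u.1 S hS) = Classical.choose (key v.1 S hS) := by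
        have := congrFun huv ⟨S, hS⟩
        exact Subtype.ext_iff.mp this
      rw [h1, h3, ← h2]
    let E : Submodule B B :=
      { carrier := {x | φ (j u.1) * x = φ (j v.1) * x}
        add_mem' := fun {y} {z} hy hz => by
          show φ (j u.1) * (y + z) = φ (j v.1) * (y + z)
          rw [mul_add, mul_add, hy, hz]
        zero_mem' := by
          show φ (j u.1) * 0 = φ (j v.1) * 0
          rw [mul_zero, mul_zero]
        smul_mem' := fun r x hx => by
          show φ (j u.1) * (r • x) = φ (j v.1) * (r • x)
          have hx' : φ (j u.1) * x = φ (j v.1) * x := hx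
          rw [smul_eq_mul, ← mul_assoc, ← hcent u.1 r, ← mul_assoc, ← hcent v.1 r,
            mul_assoc, mul_assoc, hx'] }
    have hEt : ∀ S ∈ t, S ≤ E := fun S hS x hx => hmul S hS x hx
    have hEtop : (⊤ : Submodule B B) ≤ E := le_trans ht_top (Finset.sup_le fun S hS => hEt S hS)
    have h1 : φ (j u.1) * 1 = φ (j v.1) * 1 := hEtop trivial
    rw [mul_one, mul_one] at h1
    have h2 : j u.1 = j v.1 := intMA_injective h1
    have h3 : (u.1 : ↥(Subring.center A)) = (v.1 : ↥(Subring.center A)) :=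
      Subtype.coe_injective h2
    exact Subtype.ext (Units.ext h3)
  haveI : Finite ((↥(Subring.center A))ˣ ⧸ f.ker) :=
    Finite.of_equiv _ (QuotientGroup.quotientKerEquivRange f).symm.toEquiv
  exact Finite.of_equiv _ (Subgroup.groupEquivQuotientProdSubgroup (s := f.ker)).symm

theorem cut_aux2 (G : Type u) [Group G] [Finite G]
    (h : Finite (Abelianization (MonoidAlgebra ℤ G)ˣ)) :
    Finite (↥(Subring.center (MonoidAlgebra ℤ G)))ˣ := by
  haveI : CharZero (ULift.{u} ℚ) :=
    ⟨fun a b hh => by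
      have := congrArg ULift.down hh
      exact_mod_cast this⟩
  haveI : CharZero (AlgebraicClosure (ULift.{u} ℚ)) :=
    charZero_of_injective_algebraMap (algebraMap (ULift.{u} ℚ) _).injective
  exact cut_aux (AlgebraicClosure (ULift.{u} ℚ)) G h

end AuxCut

/-- Let `G` be a finite group. If the abelianization of `(ℤG)ˣ` is
finite, then `G` is a cut group: the unit group of the center of `ℤG` is finite. -/
theorem cut_of_finite_abelianization_units (G : Type*) [Group G] [Finite G]
    (h : Finite (Abelianization (MonoidAlgebra ℤ G)ˣ)) :
    Finite (↥(Subring.center (MonoidAlgebra ℤ G)))ˣ := by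
  exact cut_aux2 G h
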